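/- Lower test-function estimate: let q > 0, α, β > −1, p > 1, and K(w,z) = (1 − z \overline{w})^{−(2+α)} on the unit disc. For holomorphic g on 𝔻 there is a constant c > 0 independent of w and g such that ∫_𝔻 |K(w,z)|^q |z g'(z)|^q (1−|z|²)^{q+β} dA(z) ≥ c (1−|w|²)^{q+(1−q)(2+α)+β−α} |w g'(w)|^q for all w ∈ 𝔻. -/

import Mathlib

open MeasureTheory Metric

noncomputable section

namespace Stmt9Aux

open Complex Set Real


/-- Circle sub-mean-value inequality for the norm of a holomorphic function. -/
lemma circle_submean {f : ℂ → ℂ} {s : Set ℂ} (hs : IsOpen s) (hf : DifferentiableOn ℂ f s)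
    {c : ℂ} {r : ℝ} (hr : 0 < r) (hsub : closedBall c r ⊆ s) :
    2 * π * ‖f c‖ ≤ ∫ θ in (0)..(2 * π), ‖f (circleMap c r θ)‖ := by
  have hd : DiffContOnCl ℂ f (ball c r) := by
    refine DifferentiableOn.diffContOnCl ?_
    rw [closure_ball c hr.ne']
    exact hf.mono hsub
  have hc : c ∈ ball c r := mem_ball_self hr
  have key := hd.circleIntegral_sub_inv_smul hc
  have h1 : ‖(2 * π * I : ℂ) • f c‖ = 2 * π * ‖f c‖ := by
    simp [norm_smul, norm_mul, abs_of_pos Real.pi_pos]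
  rw [← key] at h1
  rw [← h1]
  unfold circleIntegral
  refine (intervalIntegral.norm_integral_le_integral_norm (by positivity)).trans_eq ?_
  refine intervalIntegral.integral_congr fun θ _ => ?_
  rw [deriv_circleMap]
  have hne : circleMap c r θ - c ≠ 0 := by
    rw [circleMap_sub_center]
    simp [circleMap_zero, Complex.exp_ne_zero, hr.ne']
  simp only [smul_eq_mul, norm_mul, circleMap_sub_center, norm_inv]
  have : ‖circleMap 0 r θ‖ = r := by simp [abs_of_pos hr]
  simp only [this, Complex.norm_I]
  field_simp

/-- Area sub-mean-value inequality for the norm of a holomorphic function. -/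
lemma area_submean {f : ℂ → ℂ} {s : Set ℂ} (hs : IsOpen s) (hf : DifferentiableOn ℂ f s)
    {c : ℂ} {r : ℝ} (hr : 0 < r) (hsub : closedBall c r ⊆ s) :
    π * r ^ 2 * ‖f c‖ ≤ ∫ z in ball c r, ‖f z‖ := by
  -- the explicit polar parametrization
  set m : ℝ × ℝ → ℂ := fun p => c + p.1 * (Real.cos p.2 + Real.sin p.2 * I) with hm
  have hmc : Continuous m := by fun_prop
  have hmap : ∀ p : ℝ × ℝ, ‖m p - c‖ = |p.1| := by
    intro p
    simp only [hm, add_sub_cancel_left, norm_mul, Complex.norm_real, Real.norm_eq_abs]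
    have : ‖(Real.cos p.2 + Real.sin p.2 * I : ℂ)‖ = 1 := by
      have : (Real.cos p.2 : ℂ) + Real.sin p.2 * I = Complex.exp (p.2 * I) := by
        rw [Complex.exp_mul_I]; push_cast; ring
      rw [this, Complex.norm_exp]
      simp
    rw [this, mul_one]
  have hfc : ContinuousOn f s := hf.continuousOn
  -- G : polar integrand
  set G : ℝ × ℝ → ℝ := fun p => p.1 * ‖f (m p)‖ with hG
  have hGc : ContinuousOn G (Set.Icc (0, -π) (r, π)) := by
    apply ContinuousOn.mul continuous_fst.continuousOn
    apply ContinuousOn.norm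
    refine hfc.comp hmc.continuousOn ?_
    intro p hp
    simp only [Set.Icc_prod_eq, Set.mem_prod, Set.mem_Icc] at hp
    apply hsub
    rw [Metric.mem_closedBall, Complex.dist_eq, hmap, abs_le]
    exact ⟨by linarith [hp.1.1], hp.1.2⟩
  have hK : IsCompact (Set.Icc ((0:ℝ), -π) (r, π)) := isCompact_Icc
  have hGint : IntegrableOn G (Set.Ioo (0:ℝ) r ×ˢ Set.Ioo (-π) π) := by
    refine (hGc.integrableOn_compact hK).mono_set ?_
    rw [Set.Icc_prod_eq]
    exact Set.prod_mono Set.Ioo_subset_Icc_self Set.Ioo_subset_Icc_self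
  -- step 1: translate to center 0 and go polar
  set F : ℂ → ℝ := (ball (0:ℂ) r).indicator (fun z => ‖f (c + z)‖) with hF
  have step1 : ∫ z in ball c r, ‖f z‖ = ∫ p in Set.Ioo (0:ℝ) r ×ˢ Set.Ioo (-π) π, G p := by
    have e1 : ∫ z in ball c r, ‖f z‖ = ∫ z, F z := by
      have t1 : ∫ z in ball c r, ‖f z‖ = ∫ z, (ball c r).indicator (fun z => ‖f z‖) z :=
        (integral_indicator measurableSet_ball).symm
      have t2 : ∫ z, (ball c r).indicator (fun z => ‖f z‖) z
          = ∫ z, (ball c r).indicator (fun z => ‖f z‖) (c + z) :=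
        (integral_add_left_eq_self (fun z => (ball c r).indicator (fun z => ‖f z‖) z) c).symm
      rw [t1, t2, hF]
      refine integral_congr_ae (Filter.Eventually.of_forall fun z => ?_)
      have hiff : c + z ∈ ball c r ↔ z ∈ ball (0:ℂ) r := by
        rw [mem_ball_iff_norm, mem_ball_zero_iff, add_sub_cancel_left]
      by_cases hz : z ∈ ball (0:ℂ) r
      · simp only [Set.indicator_of_mem (hiff.2 hz), Set.indicator_of_mem hz]
      · simp only [Set.indicator_of_notMem (fun h => hz (hiff.1 h)),
          Set.indicator_of_notMem hz]
    have e2 : ∫ z, F z = ∫ p in polarCoord.target, p.1 • F (Complex.polarCoord.symm p) :=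
      (Complex.integral_comp_polarCoord_symm F).symm
    have e3 : ∀ p ∈ polarCoord.target,
        p.1 • F (Complex.polarCoord.symm p)
          = (Set.Ioo (0:ℝ) r ×ˢ Set.Ioo (-π) π).indicator G p := by
      rintro ⟨ρ, θ⟩ hp
      rw [polarCoord_target, Set.mem_prod] at hp
      have hρ : (0:ℝ) < ρ := hp.1
      have hsymm : Complex.polarCoord.symm (ρ, θ) = m (ρ, θ) - c := by
        rw [Complex.polarCoord_symm_apply]; simp [hm]
      by_cases hlt : ρ < r
      · rw [Set.indicator_of_mem, hF, Set.indicator_of_mem, hsymm, hG]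
        · simp only [smul_eq_mul]
          have hcc : c + (m (ρ, θ) - c) = m (ρ, θ) := by ring
          rw [hcc]
        · rw [mem_ball_zero_iff, hsymm, hmap, abs_of_pos hρ]
          exact hlt
        · exact Set.mem_prod.2 ⟨Set.mem_Ioo.2 ⟨hρ, hlt⟩, hp.2⟩
      · rw [Set.indicator_of_notMem, hF, Set.indicator_of_notMem, smul_zero]
        · rw [mem_ball_zero_iff, hsymm, hmap, abs_of_pos hρ]
          exact fun h => hlt h
        · intro h
          exact hlt (Set.mem_prod.1 h).1.2
    rw [e1, e2, setIntegral_congr_fun polarCoord.open_target.measurableSet e3,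
      setIntegral_indicator (measurableSet_Ioo.prod measurableSet_Ioo),
      Set.inter_eq_self_of_subset_right]
    rw [polarCoord_target]
    exact Set.prod_mono Set.Ioo_subset_Ioi_self subset_rfl
  -- step 2: Fubini
  have step2 : ∫ p in Set.Ioo (0:ℝ) r ×ˢ Set.Ioo (-π) π, G p
      = ∫ ρ in Set.Ioo (0:ℝ) r, ∫ θ in Set.Ioo (-π) π, G (ρ, θ) := by
    rw [MeasureTheory.Measure.volume_eq_prod]
    exact setIntegral_prod G hGint
  -- inner lower bound
  have inner_bd : ∀ ρ ∈ Set.Ioo (0:ℝ) r,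
      2 * π * ‖f c‖ * ρ ≤ ∫ θ in Set.Ioo (-π) π, G (ρ, θ) := by
    intro ρ hρ
    have hcm : ∀ θ : ℝ, m (ρ, θ) = circleMap c ρ θ := by
      intro θ
      rw [hm, circleMap]
      push_cast [Complex.exp_mul_I]
      ring_nf
    have hper : Function.Periodic (fun θ => ‖f (circleMap c ρ θ)‖) (2 * π) :=
      (periodic_circleMap c ρ).comp fun z => ‖f z‖
    have hshift := hper.intervalIntegral_add_eq (-π) 0
    rw [(by ring : -π + 2*π = π), (by ring : (0:ℝ) + 2*π = 2*π)] at hshift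
    have hrw : ∫ θ in Set.Ioo (-π) π, G (ρ, θ) = ρ * ∫ θ in (0)..(2*π), ‖f (circleMap c ρ θ)‖ := by
      calc ∫ θ in Set.Ioo (-π) π, G (ρ, θ) = ∫ θ in (-π)..π, ρ * ‖f (circleMap c ρ θ)‖ := by
            rw [intervalIntegral.integral_of_le (by linarith [Real.pi_pos] : -π ≤ π),
              integral_Ioc_eq_integral_Ioo]
            refine setIntegral_congr_fun measurableSet_Ioo fun θ _ => ?_
            simp [hG, hcm]
        _ = ρ * ∫ θ in (-π)..π, ‖f (circleMap c ρ θ)‖ := by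
            rw [intervalIntegral.integral_const_mul]
        _ = ρ * ∫ θ in (0)..(2*π), ‖f (circleMap c ρ θ)‖ := by rw [hshift]
    rw [hrw]
    have hsub2 : closedBall c ρ ⊆ s := fun z hz =>
      hsub (closedBall_subset_closedBall hρ.2.le hz)
    have := circle_submean hs hf hρ.1 hsub2
    calc 2 * π * ‖f c‖ * ρ = ρ * (2 * π * ‖f c‖) := by ring
    _ ≤ ρ * ∫ θ in (0)..(2*π), ‖f (circleMap c ρ θ)‖ :=
        mul_le_mul_of_nonneg_left this hρ.1.le
  -- outer integral
  have houter : IntegrableOn (fun ρ => ∫ θ in Set.Ioo (-π) π, G (ρ, θ)) (Set.Ioo (0:ℝ) r) := by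
    have h2 := hGint
    rw [IntegrableOn, MeasureTheory.Measure.volume_eq_prod, ← Measure.prod_restrict] at h2
    exact h2.integral_prod_left
  have step3 : ∫ ρ in Set.Ioo (0:ℝ) r, 2 * π * ‖f c‖ * ρ
      ≤ ∫ ρ in Set.Ioo (0:ℝ) r, ∫ θ in Set.Ioo (-π) π, G (ρ, θ) := by
    refine setIntegral_mono_on ?_ houter measurableSet_Ioo inner_bd
    exact ((((continuous_const.mul continuous_id).continuousOn).integrableOn_compact
      (isCompact_Icc (a := (0:ℝ)) (b := r))).mono_set Set.Ioo_subset_Icc_self : IntegrableOn (fun ρ : ℝ => 2 * π * ‖f c‖ * ρ) (Set.Ioo 0 r))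
  have step4 : ∫ ρ in Set.Ioo (0:ℝ) r, 2 * π * ‖f c‖ * ρ = π * r ^ 2 * ‖f c‖ := by
    rw [← integral_Ioc_eq_integral_Ioo,
      ← intervalIntegral.integral_of_le hr.le, intervalIntegral.integral_const_mul, integral_id]
    ring
  rw [step1, step2, ← step4]
  exact step3


/-- Sub-mean-value property for `‖f‖^θ`, `0 < θ ≤ 1`, with a non-sharp constant. -/
lemma submean_rpow {θ : ℝ} (hθ0 : 0 < θ) (hθ1 : θ ≤ 1) {f : ℂ → ℂ} {s : Set ℂ}
    (hs : IsOpen s) (hf : DifferentiableOn ℂ f s) {c : ℂ} {ρ : ℝ} (hρ : 0 < ρ)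
    (hsub : closedBall c ρ ⊆ s) :
    ‖f c‖ ^ θ * ρ ^ 2 ≤ (2 ^ (2/θ) / π) * ∫ z in ball c ρ, ‖f z‖ ^ θ := by
  have hcont : ContinuousOn (fun z => ‖f z‖) (closedBall c ρ) :=
    (hf.continuousOn.mono hsub).norm
  have hcontθ : ContinuousOn (fun z => ‖f z‖ ^ θ) (closedBall c ρ) := by
    exact hcont.rpow_const (fun x _ => Or.inr hθ0.le)
  set J : ℝ := ∫ z in ball c ρ, ‖f z‖ ^ θ with hJ
  have hJint : IntegrableOn (fun z => ‖f z‖ ^ θ) (ball c ρ) :=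
    (hcontθ.integrableOn_compact (isCompact_closedBall c ρ)).mono_set ball_subset_closedBall
  have hJ0 : 0 ≤ J := setIntegral_nonneg measurableSet_ball
    (fun z _ => Real.rpow_nonneg (norm_nonneg _) θ)
  -- the sup over sub-closed-balls
  set M : ℝ → ℝ := fun t => sSup ((fun z => ‖f z‖) '' closedBall c (t * ρ)) with hMdef
  have hball : ∀ t ∈ Set.Icc (0:ℝ) 1, closedBall c (t * ρ) ⊆ closedBall c ρ :=
    fun t ht => closedBall_subset_closedBall (by nlinarith [ht.1, ht.2])
  have hne : ∀ t ∈ Set.Icc (0:ℝ) 1, ((fun z => ‖f z‖) '' closedBall c (t * ρ)).Nonempty :=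
    fun t ht => ⟨‖f c‖, Set.mem_image_of_mem _ (mem_closedBall_self (by nlinarith [ht.1]))⟩
  have hbdd : ∀ t ∈ Set.Icc (0:ℝ) 1, BddAbove ((fun z => ‖f z‖) '' closedBall c (t * ρ)) := by
    intro t ht
    exact ((isCompact_closedBall c (t*ρ)).image_of_continuousOn
      (hcont.mono (hball t ht))).bddAbove
  have hMle : ∀ t ∈ Set.Icc (0:ℝ) 1, ∀ z ∈ closedBall c (t * ρ), ‖f z‖ ≤ M t :=
    fun t ht z hz => le_csSup (hbdd t ht) (Set.mem_image_of_mem _ hz)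
  have hM0 : ∀ t ∈ Set.Icc (0:ℝ) 1, 0 ≤ M t :=
    fun t ht => le_trans (norm_nonneg (f c))
      (hMle t ht c (mem_closedBall_self (by nlinarith [ht.1])))
  -- the absorption set
  set A : Set ℝ := {x | ∃ t, 0 ≤ t ∧ t < 1 ∧ x = (1 - t) ^ (2/θ) * M t} with hA
  have hAne : A.Nonempty := ⟨(1 - 0) ^ (2/θ) * M 0, 0, le_refl 0, one_pos, rfl⟩
  have hAbdd : BddAbove A := by
    refine ⟨M 1, fun x hx => ?_⟩
    obtain ⟨t, ht0, ht1, rfl⟩ := hx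
    have htI : t ∈ Set.Icc (0:ℝ) 1 := ⟨ht0, ht1.le⟩
    have h1 : (1 - t) ^ (2/θ) ≤ 1 :=
      Real.rpow_le_one (by linarith) (by linarith) (by positivity)
    have h2 : M t ≤ M 1 := by
      refine csSup_le (hne t htI) fun x hx => ?_
      obtain ⟨z, hz, rfl⟩ := hx
      exact hMle 1 ⟨zero_le_one, le_refl 1⟩ z (by simpa using hball t htI hz)
    calc (1 - t) ^ (2/θ) * M t ≤ 1 * M t := by
          exact mul_le_mul_of_nonneg_right h1 (hM0 t htI)
      _ = M t := one_mul _
      _ ≤ M 1 := h2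
  set S : ℝ := sSup A with hS
  have hfcS : ‖f c‖ ≤ S := by
    have h0 : ‖f c‖ ≤ M 0 := hMle 0 ⟨le_refl 0, zero_le_one⟩ c (by simp [mem_closedBall_self])
    have : (1 - 0 : ℝ) ^ (2/θ) * M 0 ∈ A := ⟨0, le_refl 0, one_pos, rfl⟩
    have h1 : (1 - 0 : ℝ) ^ (2/θ) * M 0 ≤ S := le_csSup hAbdd this
    simpa using h0.trans (by simpa using h1)
  have hS0 : 0 ≤ S := le_trans (norm_nonneg _) hfcS
  -- key iteration estimate
  have hkey : ∀ t s', 0 ≤ t → t < s' → s' < 1 →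
      M t ≤ M s' ^ (1 - θ) * J / (π * ((s' - t) * ρ) ^ 2) := by
    intro t s' ht0 hts hs'1
    have hts0 : 0 < s' - t := by linarith
    have hr0 : 0 < (s' - t) * ρ := by positivity
    have htI : t ∈ Set.Icc (0:ℝ) 1 := ⟨ht0, by linarith⟩
    have hs'I : s' ∈ Set.Icc (0:ℝ) 1 := ⟨by linarith, hs'1.le⟩
    refine csSup_le (hne t htI) ?_
    rintro x ⟨z, hz, rfl⟩
    have hzball : closedBall z ((s' - t) * ρ) ⊆ closedBall c (s' * ρ) := by
      intro x hx
      rw [mem_closedBall] at hx ⊢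
      rw [mem_closedBall] at hz
      calc dist x c ≤ dist x z + dist z c := dist_triangle x z c
        _ ≤ (s' - t) * ρ + t * ρ := add_le_add hx hz
        _ = s' * ρ := by ring
    have hzs : closedBall z ((s' - t) * ρ) ⊆ s :=
      fun x hx => hsub (hball s' hs'I (hzball hx))
    have harea := area_submean hs hf hr0 hzs
    -- pointwise bound inside ball z r
    have hpt : ∀ ζ ∈ ball z ((s' - t) * ρ), ‖f ζ‖ ≤ M s' ^ (1 - θ) * ‖f ζ‖ ^ θ := by
      intro ζ hζ
      have hζM : ‖f ζ‖ ≤ M s' :=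
        hMle s' hs'I ζ (hzball (ball_subset_closedBall hζ))
      rcases eq_or_lt_of_le (norm_nonneg (f ζ)) with h0 | h0
      · rw [← h0, Real.zero_rpow hθ0.ne']
        have := Real.rpow_nonneg (hM0 s' hs'I) (1 - θ)
        simp [mul_comm]
      · have h2 : ‖f ζ‖ ^ (1 - θ) ≤ M s' ^ (1 - θ) :=
          Real.rpow_le_rpow (norm_nonneg _) hζM (by linarith)
        calc ‖f ζ‖ = ‖f ζ‖ ^ (1 - θ) * ‖f ζ‖ ^ θ := by
              rw [← Real.rpow_add h0]; simp
          _ ≤ M s' ^ (1 - θ) * ‖f ζ‖ ^ θ :=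
              mul_le_mul_of_nonneg_right h2 (Real.rpow_nonneg (norm_nonneg _) θ)
    -- integrate
    have hint1 : IntegrableOn (fun ζ => ‖f ζ‖) (ball z ((s' - t) * ρ)) := by
      refine ((hcont.mono ?_).integrableOn_compact (isCompact_closedBall _ _)).mono_set
        ball_subset_closedBall
      exact fun x hx => hball s' hs'I (hzball hx)
    have hint2 : IntegrableOn (fun ζ => M s' ^ (1 - θ) * ‖f ζ‖ ^ θ) (ball z ((s' - t) * ρ)) := by
      refine (((hcontθ.mono ?_).integrableOn_compact (isCompact_closedBall _ _)).mono_set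
        ball_subset_closedBall).const_mul _
      exact fun x hx => hball s' hs'I (hzball hx)
    have hsubset2 : ball z ((s' - t) * ρ) ⊆ ball c ρ := by
      refine subset_trans (fun x hx => hzball (ball_subset_closedBall hx)) ?_
      exact closedBall_subset_ball (by nlinarith)
    have hchain : π * ((s' - t) * ρ) ^ 2 * ‖f z‖ ≤ M s' ^ (1 - θ) * J := by
      calc π * ((s' - t) * ρ) ^ 2 * ‖f z‖ ≤ ∫ ζ in ball z ((s' - t) * ρ), ‖f ζ‖ := harea
        _ ≤ ∫ ζ in ball z ((s' - t) * ρ), M s' ^ (1 - θ) * ‖f ζ‖ ^ θ :=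
            setIntegral_mono_on hint1 hint2 measurableSet_ball hpt
        _ = M s' ^ (1 - θ) * ∫ ζ in ball z ((s' - t) * ρ), ‖f ζ‖ ^ θ := by
            rw [integral_const_mul]
        _ ≤ M s' ^ (1 - θ) * J := by
            refine mul_le_mul_of_nonneg_left ?_ (Real.rpow_nonneg (hM0 s' hs'I) _)
            exact setIntegral_mono_set hJint
              (Filter.Eventually.of_forall fun ζ => Real.rpow_nonneg (norm_nonneg _) θ)
              (HasSubset.Subset.eventuallyLE hsubset2)
    rw [le_div_iff₀ (by positivity)]
    linarith [hchain]
  -- absorption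
  have habs : S ≤ 2 ^ (2/θ) * (J / (π * ρ ^ 2)) * S ^ (1 - θ) := by
    refine csSup_le hAne ?_
    rintro x ⟨t, ht0, ht1, rfl⟩
    set b : ℝ := (1 - t) / 2 with hb
    have hb0 : 0 < b := by simp only [hb]; linarith
    have hs' : t < t + b ∧ t + b < 1 := ⟨by linarith, by simp only [hb]; linarith⟩
    have hkey' := hkey t (t + b) ht0 hs'.1 hs'.2
    have hs'I : t + b ∈ Set.Icc (0:ℝ) 1 := ⟨by linarith, hs'.2.le⟩
    have h1mb : 1 - (t + b) = b := by simp only [hb]; ring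
    -- M (t+b) ≤ b ^ (-(2/θ)) * S
    have hMS : M (t + b) ≤ b ^ (-(2/θ)) * S := by
      have hmem : (1 - (t + b)) ^ (2/θ) * M (t + b) ∈ A :=
        ⟨t + b, by linarith, hs'.2, rfl⟩
      have h2 := le_csSup hAbdd hmem
      rw [h1mb] at h2
      have h3 : b ^ (-(2/θ)) * (b ^ (2/θ) * M (t + b)) ≤ b ^ (-(2/θ)) * S :=
        mul_le_mul_of_nonneg_left h2 (Real.rpow_nonneg hb0.le _)
      calc M (t + b) = b ^ (-(2/θ)) * (b ^ (2/θ) * M (t + b)) := by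
            rw [← mul_assoc, ← Real.rpow_add hb0]
            simp
        _ ≤ b ^ (-(2/θ)) * S := h3
    have hMS' : M (t + b) ^ (1 - θ) ≤ (b ^ (-(2/θ)) * S) ^ (1 - θ) :=
      Real.rpow_le_rpow (hM0 _ hs'I) hMS (by linarith)
    have hexp : (b ^ (-(2/θ)) * S) ^ (1 - θ) = b ^ (-(2/θ) * (1 - θ)) * S ^ (1 - θ) := by
      rw [Real.mul_rpow (Real.rpow_nonneg hb0.le _) hS0, Real.rpow_mul hb0.le]
    rw [(by ring : t + b - t = b)] at hkey'
    have hMt : M t ≤ b ^ (-(2/θ) * (1 - θ)) * S ^ (1 - θ) * J / (π * (b * ρ) ^ 2) := by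
      refine hkey'.trans ?_
      have hnum : M (t + b) ^ (1 - θ) * J ≤ b ^ (-(2/θ) * (1 - θ)) * S ^ (1 - θ) * J :=
        mul_le_mul_of_nonneg_right (hMS'.trans hexp.le) hJ0
      gcongr
    have h1t : (1 - t) ^ (2/θ) = 2 ^ (2/θ) * b ^ (2/θ) := by
      rw [← Real.mul_rpow (by norm_num) hb0.le]
      congr 1
      rw [hb]; ring
    have hbb : b ^ (2/θ) * b ^ (-(2/θ) * (1 - θ)) = b ^ (2:ℕ) := by
      rw [← Real.rpow_add hb0, ← Real.rpow_natCast b 2]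
      congr 1
      push_cast
      field_simp
      ring
    calc (1 - t) ^ (2/θ) * M t
        ≤ (1 - t) ^ (2/θ) * (b ^ (-(2/θ) * (1 - θ)) * S ^ (1 - θ) * J / (π * (b * ρ) ^ 2)) :=
          mul_le_mul_of_nonneg_left hMt (Real.rpow_nonneg (by linarith) _)
      _ = 2 ^ (2/θ) * (J / (π * ρ ^ 2)) * S ^ (1 - θ) := by
          rw [h1t, (by ring : (b * ρ) ^ 2 = b ^ (2:ℕ) * ρ ^ 2), ← hbb]
          have hb1 : (0:ℝ) < b ^ (2/θ) := Real.rpow_pos_of_pos hb0 _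
          have hb2 : (0:ℝ) < b ^ (-(2/θ) * (1 - θ)) := Real.rpow_pos_of_pos hb0 _
          field_simp
  -- conclude
  rcases eq_or_lt_of_le hS0 with hS0' | hS0'
  · have hfc0 : ‖f c‖ = 0 := le_antisymm (by rw [← hS0'] at hfcS; exact hfcS) (norm_nonneg _)
    rw [hfc0, Real.zero_rpow hθ0.ne']
    have : (0:ℝ) < 2 ^ (2/θ) / π := by positivity
    nlinarith [hJ0]
  · have hSθ : S ^ θ ≤ 2 ^ (2/θ) * (J / (π * ρ ^ 2)) := by
      have h1 : S ^ θ * S ^ (1 - θ) ≤ (2 ^ (2/θ) * (J / (π * ρ ^ 2))) * S ^ (1 - θ) := by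
        rw [← Real.rpow_add hS0']
        rw [(by ring : θ + (1 - θ) = 1), Real.rpow_one]
        exact habs
      exact le_of_mul_le_mul_right h1 (Real.rpow_pos_of_pos hS0' _)
    have hfcθ : ‖f c‖ ^ θ ≤ 2 ^ (2/θ) * (J / (π * ρ ^ 2)) :=
      (Real.rpow_le_rpow (norm_nonneg _) hfcS hθ0.le).trans hSθ
    calc ‖f c‖ ^ θ * ρ ^ 2 ≤ (2 ^ (2/θ) * (J / (π * ρ ^ 2))) * ρ ^ 2 :=
          mul_le_mul_of_nonneg_right hfcθ (by positivity)
      _ = 2 ^ (2/θ) / π * J := by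
          field_simp

/-- Sub-mean-value property for `‖f‖^q`, any `q > 0`. -/
lemma submean_q (q : ℝ) (hq : 0 < q) :
    ∃ C : ℝ, 0 < C ∧ ∀ (f : ℂ → ℂ) (s : Set ℂ), IsOpen s → DifferentiableOn ℂ f s →
      ∀ (c : ℂ) (ρ : ℝ), 0 < ρ → closedBall c ρ ⊆ s →
        ‖f c‖ ^ q * ρ ^ 2 ≤ C * ∫ z in ball c ρ, ‖f z‖ ^ q := by
  set n : ℕ := ⌈q⌉₊ with hn
  have hn0 : 0 < n := Nat.ceil_pos.2 hq
  have hnq : q ≤ n := Nat.le_ceil q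
  set θ : ℝ := q / n with hθ
  have hθ0 : 0 < θ := div_pos hq (by exact_mod_cast hn0)
  have hθ1 : θ ≤ 1 := by
    rw [hθ, div_le_one (by exact_mod_cast hn0)]
    exact hnq
  refine ⟨2 ^ (2/θ) / π, by positivity, ?_⟩
  intro f s hs hf c ρ hρ hsub
  have hnorm : ∀ z : ℂ, ‖(f z) ^ n‖ ^ θ = ‖f z‖ ^ q := by
    intro z
    rw [norm_pow, ← Real.rpow_natCast ‖f z‖ n, ← Real.rpow_mul (norm_nonneg _)]
    congr 1
    rw [hθ]
    field_simp
  have key := submean_rpow hθ0 hθ1 hs (hf.pow n) hρ hsub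
  rw [Pi.pow_apply, hnorm c] at key
  refine key.trans ?_
  apply mul_le_mul_of_nonneg_left _ (by positivity)
  refine le_of_eq (setIntegral_congr_fun measurableSet_ball fun z _ => hnorm z)

end Stmt9Aux

open Stmt9Aux in
set_option maxHeartbeats 1000000 in
/-- Lower test-function estimate with the kernel `K(w,z) = (1 - z \overline{w})^{-(2+α)}`:
`∫_𝔻 |K(w,z)|^q |z g'(z)|^q (1-|z|²)^{q+β} dA(z)
  ≥ c (1-|w|²)^{q+(1-q)(2+α)+β-α} |w g'(w)|^q`. -/
theorem stmt9 (p q α β : ℝ) (hq : 0 < q) (hα : -1 < α) (hβ : -1 < β) (hp : 1 < p) :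
    ∃ c : ℝ, 0 < c ∧
      ∀ (g : ℂ → ℂ), DifferentiableOn ℂ g (ball 0 1) →
        ∀ w ∈ ball (0:ℂ) 1,
          ENNReal.ofReal
              (c * (1 - ‖w‖ ^ 2) ^ (q + (1 - q) * (2 + α) + β - α) * ‖w * deriv g w‖ ^ q)
            ≤ ∫⁻ z in ball (0:ℂ) 1,
                ENNReal.ofReal
                  ((‖1 - z * (starRingEnd ℂ) w‖ ^ (-(2 + α))) ^ q *
                    ‖z * deriv g z‖ ^ q * (1 - ‖z‖ ^ 2) ^ (q + β)) := by
  obtain ⟨C, hC, hsm⟩ := submean_q q hq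
  set e₁ : ℝ := -(2 + α) * q with he₁
  set s' : ℝ := q + β with hs'
  have he₁0 : e₁ ≤ 0 := by nlinarith
  set m : ℝ := min ((4:ℝ)⁻¹ ^ s') ((3:ℝ) ^ s') with hm
  have hm0 : 0 < m := lt_min (Real.rpow_pos_of_pos (by norm_num) _)
    (Real.rpow_pos_of_pos (by norm_num) _)
  set c₁ : ℝ := (3/2) ^ e₁ * m with hc₁
  have hc₁0 : 0 < c₁ := mul_pos (Real.rpow_pos_of_pos (by norm_num) _) hm0
  refine ⟨c₁ * C⁻¹ / 16, by positivity, ?_⟩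
  intro g hg w hw
  set f : ℂ → ℂ := fun z => z * deriv g z with hfdef
  have hfd : DifferentiableOn ℂ f (ball 0 1) :=
    differentiableOn_id.mul ((hg.analyticOnNhd isOpen_ball).deriv.differentiableOn)
  rw [mem_ball_zero_iff] at hw
  set ρ : ℝ := (1 - ‖w‖) / 2 with hρdef
  have hρ0 : 0 < ρ := by rw [hρdef]; linarith
  have hsubB : closedBall w ρ ⊆ ball (0:ℂ) 1 := by
    intro x hx
    rw [mem_closedBall, dist_eq_norm] at hx
    rw [mem_ball_zero_iff]
    calc ‖x‖ = ‖x - w + w‖ := by ring_nf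
      _ ≤ ‖x - w‖ + ‖w‖ := norm_add_le _ _
      _ ≤ ρ + ‖w‖ := by linarith
      _ < 1 := by rw [hρdef]; linarith
  set v : ℝ := 1 - ‖w‖ ^ 2 with hv
  have hw0 : 0 ≤ ‖w‖ := norm_nonneg w
  have hv0 : 0 < v := by nlinarith
  have hv1 : v ≤ 2 * (1 - ‖w‖) := by nlinarith
  have hv2 : 1 - ‖w‖ ≤ v := by nlinarith
  -- pointwise comparison on the small ball
  have hpt : ∀ z ∈ ball w ρ,
      ENNReal.ofReal (c₁ * v ^ (e₁ + s') * ‖f z‖ ^ q)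
        ≤ ENNReal.ofReal ((‖1 - z * (starRingEnd ℂ) w‖ ^ (-(2 + α))) ^ q *
            ‖f z‖ ^ q * (1 - ‖z‖ ^ 2) ^ s') := by
    intro z hz
    apply ENNReal.ofReal_le_ofReal
    rw [mem_ball, dist_eq_norm] at hz
    have hz0 : 0 ≤ ‖z‖ := norm_nonneg z
    have hz1 : ‖z‖ < 1 := by
      have : ‖z‖ ≤ ‖z - w‖ + ‖w‖ := by
        calc ‖z‖ = ‖z - w + w‖ := by ring_nf
          _ ≤ ‖z - w‖ + ‖w‖ := norm_add_le _ _
      rw [hρdef] at hz; linarith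
    set X : ℝ := ‖1 - z * (starRingEnd ℂ) w‖ with hX
    have hXv : X ≤ 3/2 * v := by
      have hsplit : 1 - z * (starRingEnd ℂ) w
          = (1 - w * (starRingEnd ℂ) w) + (w - z) * (starRingEnd ℂ) w := by ring
      have h1 : ‖(1:ℂ) - w * (starRingEnd ℂ) w‖ = v := by
        rw [Complex.mul_conj]
        have : ((1:ℂ) - (Complex.normSq w : ℂ)) = ((v:ℝ) : ℂ) := by
          rw [hv, Complex.normSq_eq_norm_sq]
          push_cast
          simp
        rw [this, Complex.norm_real, Real.norm_eq_abs, abs_of_pos hv0]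
      have h2 : ‖(w - z) * (starRingEnd ℂ) w‖ ≤ ρ * 1 := by
        rw [norm_mul, RCLike.norm_conj]
        have h3 : ‖w - z‖ ≤ ρ := by
          rw [← norm_neg]; simp only [neg_sub]; exact hz.le
        exact mul_le_mul h3 hw.le hw0 hρ0.le
      calc X ≤ ‖(1:ℂ) - w * (starRingEnd ℂ) w‖ + ‖(w - z) * (starRingEnd ℂ) w‖ := by
            rw [hX, hsplit]; exact norm_add_le _ _
        _ ≤ v + ρ * 1 := by linarith [h1.le, h2]
        _ ≤ 3/2 * v := by rw [hρdef]; linarith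
    have hX0 : 0 < X := by
      rw [hX, norm_pos_iff, sub_ne_zero]
      intro h
      have : ‖z * (starRingEnd ℂ) w‖ < 1 := by
        rw [norm_mul, RCLike.norm_conj]
        nlinarith
      rw [← h] at this
      simp at this
    -- kernel bound
    have hker : (3/2) ^ e₁ * v ^ e₁ ≤ (X ^ (-(2 + α))) ^ q := by
      rw [← Real.rpow_mul (norm_nonneg _), ← he₁]
      calc (3/2 : ℝ) ^ e₁ * v ^ e₁ = (3/2 * v) ^ e₁ := by
            rw [← Real.mul_rpow (by norm_num) hv0.le]
        _ ≤ X ^ e₁ := Real.rpow_le_rpow_of_nonpos hX0 hXv he₁0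
    -- weight bound
    set u : ℝ := 1 - ‖z‖ ^ 2 with hu
    have hu0 : 0 < u := by
      have := pow_lt_one₀ hz0 hz1 two_ne_zero
      rw [hu]; linarith
    have huv1 : v / 4 ≤ u := by
      have h3 : ‖z‖ ≤ ‖z - w‖ + ‖w‖ := by
        calc ‖z‖ = ‖z - w + w‖ := by ring_nf
          _ ≤ ‖z - w‖ + ‖w‖ := norm_add_le _ _
      rw [hρdef] at hz
      have h4 : 1 - ‖z‖ ≤ 1 - ‖z‖ ^ 2 := by nlinarith [hz0, hz1]
      rw [hu]
      linarith
    have huv2 : u ≤ 3 * v := by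
      have : ‖w‖ ≤ ‖z - w‖ + ‖z‖ := by
        calc ‖w‖ = ‖-(z - w) + z‖ := by ring_nf
          _ ≤ ‖-(z - w)‖ + ‖z‖ := norm_add_le _ _
          _ = ‖z - w‖ + ‖z‖ := by rw [norm_neg]
      rw [hρdef] at hz
      have h4 : 1 - ‖z‖ ^ 2 ≤ 2 * (1 - ‖z‖) := by nlinarith [sq_nonneg (1 - ‖z‖)]
      rw [hu]
      linarith
    have hwt : m * v ^ s' ≤ u ^ s' := by
      rcases le_or_gt 0 s' with hsgn | hsgn
      · calc m * v ^ s' ≤ (4:ℝ)⁻¹ ^ s' * v ^ s' :=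
              mul_le_mul_of_nonneg_right (min_le_left _ _) (Real.rpow_nonneg hv0.le _)
          _ = (v / 4) ^ s' := by
              rw [← Real.mul_rpow (by norm_num) hv0.le]
              congr 1; ring
          _ ≤ u ^ s' := Real.rpow_le_rpow (by positivity) huv1 hsgn
      · calc m * v ^ s' ≤ (3:ℝ) ^ s' * v ^ s' :=
              mul_le_mul_of_nonneg_right (min_le_right _ _) (Real.rpow_nonneg hv0.le _)
          _ = (3 * v) ^ s' := by rw [← Real.mul_rpow (by norm_num) hv0.le]
          _ ≤ u ^ s' := Real.rpow_le_rpow_of_nonpos hu0 huv2 hsgn.le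
    calc c₁ * v ^ (e₁ + s') * ‖f z‖ ^ q
        = ((3/2) ^ e₁ * v ^ e₁) * ‖f z‖ ^ q * (m * v ^ s') := by
          rw [hc₁, Real.rpow_add hv0]; ring
      _ ≤ (X ^ (-(2 + α))) ^ q * ‖f z‖ ^ q * u ^ s' := by
          have h1 : (0:ℝ) ≤ ‖f z‖ ^ q := Real.rpow_nonneg (norm_nonneg _) _
          refine mul_le_mul (mul_le_mul_of_nonneg_right hker h1) hwt ?_ ?_
          · positivity
          · positivity
  -- integrability of ‖f‖^q on the small ball
  have hcont : ContinuousOn (fun z => ‖f z‖ ^ q) (closedBall w ρ) := by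
    refine ContinuousOn.rpow_const ?_ (fun x _ => Or.inr hq.le)
    exact ((hfd.continuousOn.mono hsubB)).norm
  have hint : IntegrableOn (fun z => ‖f z‖ ^ q) (ball w ρ) :=
    (hcont.integrableOn_compact (isCompact_closedBall w ρ)).mono_set ball_subset_closedBall
  set J : ℝ := ∫ z in ball w ρ, ‖f z‖ ^ q with hJdef
  have hJ0 : 0 ≤ J := setIntegral_nonneg measurableSet_ball
    (fun z _ => Real.rpow_nonneg (norm_nonneg _) _)
  have hJ := hsm f (ball 0 1) isOpen_ball hfd w ρ hρ0 hsubB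
  -- real-number comparison of the constants
  have hreal : c₁ * C⁻¹ / 16 * v ^ (q + (1 - q) * (2 + α) + β - α) * ‖f w‖ ^ q
      ≤ c₁ * v ^ (e₁ + s') * J := by
    have hE : q + (1 - q) * (2 + α) + β - α = (e₁ + s') + 2 := by
      rw [he₁, hs']; ring
    rw [hE, Real.rpow_add hv0]
    have hv4 : v / 4 ≤ ρ := by rw [hρdef]; linarith
    have hρsq : v ^ (2:ℝ) / 16 ≤ ρ ^ 2 := by
      rw [Real.rpow_two]
      nlinarith
    have hfw0 : (0:ℝ) ≤ ‖f w‖ ^ q := Real.rpow_nonneg (norm_nonneg _) _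
    have step1 : ‖f w‖ ^ q * (v ^ (2:ℝ) / 16) ≤ ‖f w‖ ^ q * ρ ^ 2 :=
      mul_le_mul_of_nonneg_left hρsq hfw0
    have step2 : ‖f w‖ ^ q * ρ ^ 2 ≤ C * J := hJ
    have hve : (0:ℝ) ≤ v ^ (e₁ + s') := Real.rpow_nonneg hv0.le _
    calc c₁ * C⁻¹ / 16 * (v ^ (e₁ + s') * v ^ (2:ℝ)) * ‖f w‖ ^ q
        = (c₁ * v ^ (e₁ + s')) * (C⁻¹ * (‖f w‖ ^ q * (v ^ (2:ℝ) / 16))) := by ring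
      _ ≤ (c₁ * v ^ (e₁ + s')) * (C⁻¹ * (C * J)) := by
          refine mul_le_mul_of_nonneg_left ?_ (by positivity)
          exact mul_le_mul_of_nonneg_left (step1.trans step2) (by positivity)
      _ = c₁ * v ^ (e₁ + s') * J := by
          field_simp
  -- pass to lintegrals
  have hconv : ∫⁻ z in ball w ρ, ENNReal.ofReal (‖f z‖ ^ q) = ENNReal.ofReal J :=
    (ofReal_integral_eq_lintegral_ofReal hint
      (Filter.Eventually.of_forall fun z => Real.rpow_nonneg (norm_nonneg _) _)).symm
  calc ENNReal.ofReal (c₁ * C⁻¹ / 16 * v ^ (q + (1 - q) * (2 + α) + β - α) * ‖f w‖ ^ q)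
      ≤ ENNReal.ofReal (c₁ * v ^ (e₁ + s') * J) := ENNReal.ofReal_le_ofReal hreal
    _ = ENNReal.ofReal (c₁ * v ^ (e₁ + s')) * ENNReal.ofReal J := by
        rw [← ENNReal.ofReal_mul (by positivity)]
    _ = ENNReal.ofReal (c₁ * v ^ (e₁ + s')) * ∫⁻ z in ball w ρ, ENNReal.ofReal (‖f z‖ ^ q) := by
        rw [hconv]
    _ = ∫⁻ z in ball w ρ, ENNReal.ofReal (c₁ * v ^ (e₁ + s') * ‖f z‖ ^ q) := by
        rw [← lintegral_const_mul' _ _ ENNReal.ofReal_ne_top]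
        refine lintegral_congr fun z => ?_
        rw [← ENNReal.ofReal_mul (by positivity)]
    _ ≤ ∫⁻ z in ball w ρ,
          ENNReal.ofReal ((‖1 - z * (starRingEnd ℂ) w‖ ^ (-(2 + α))) ^ q *
            ‖f z‖ ^ q * (1 - ‖z‖ ^ 2) ^ s') :=
        setLIntegral_mono' measurableSet_ball hpt
    _ ≤ ∫⁻ z in ball (0:ℂ) 1,
          ENNReal.ofReal ((‖1 - z * (starRingEnd ℂ) w‖ ^ (-(2 + α))) ^ q *
            ‖f z‖ ^ q * (1 - ‖z‖ ^ 2) ^ s') :=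
        lintegral_mono' (Measure.restrict_mono (ball_subset_closedBall.trans hsubB) le_rfl)
          (le_refl _)
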